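/- arXiv:2508.16957 — 3 statements merged into one kernel-verified Lean document; each statement's English description precedes it below -/
import Mathlib

section
/- Let ε > 0 and let g : [0,∞) → ℝ be continuous with g(t) ≥ 0 for all t. Suppose φ : [0,∞) → ℝ is differentiable with φ'(t) = −ε·g(t)·sin(φ(t)) and φ(0) ∈ (−π, π). Then φ(t) ∈ (−π, π) for all t ≥ 0, and the function t ↦ |φ(t)| is nonincreasing on [0,∞). -/
open Real

lemma antitone_arccos' : Antitone Real.arccos := fun x y h => by
  unfold Real.arccos
  exact sub_le_sub_left (Real.monotone_arcsin h) _

/-- Forward invariance of `(−π, π)` and monotone decay of `|φ|` for the phase-difference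
equation `φ' = −ε g(t) sin(φ)` with `g ≥ 0`. -/
theorem phase_difference_invariance_and_decay
    (ε : ℝ) (hε : 0 < ε) (g : ℝ → ℝ)
    (hg_cont : ContinuousOn g (Set.Ici (0 : ℝ)))
    (hg : ∀ t, 0 ≤ t → 0 ≤ g t)
    (φ : ℝ → ℝ)
    (hφ : ∀ t, 0 ≤ t → HasDerivAt φ (-ε * g t * Real.sin (φ t)) t)
    (h0 : φ 0 ∈ Set.Ioo (-π) π) :
    (∀ t, 0 ≤ t → φ t ∈ Set.Ioo (-π) π) ∧
      AntitoneOn (fun t => |φ t|) (Set.Ici (0 : ℝ)) := by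
  -- continuity of φ on [0, ∞)
  have hφcont : ContinuousOn φ (Set.Ici (0 : ℝ)) := fun t ht =>
    ((hφ t ht).continuousAt).continuousWithinAt
  -- ψ = cos ∘ φ is monotone on [0, ∞)
  set ψ : ℝ → ℝ := fun t => Real.cos (φ t) with hψdef
  have hψderiv : ∀ t, 0 ≤ t →
      HasDerivAt ψ (-Real.sin (φ t) * (-ε * g t * Real.sin (φ t))) t := fun t ht =>
    (hφ t ht).cos
  have hψmono : MonotoneOn ψ (Set.Ici (0 : ℝ)) := by
    apply monotoneOn_of_deriv_nonneg (convex_Ici 0)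
    · exact fun t ht => ((hψderiv t ht).continuousAt).continuousWithinAt
    · intro t ht
      rw [interior_Ici] at ht
      exact ((hψderiv t (le_of_lt ht)).differentiableAt).differentiableWithinAt
    · intro t ht
      rw [interior_Ici] at ht
      rw [(hψderiv t (le_of_lt ht)).deriv]
      have h1 : 0 ≤ g t := hg t (le_of_lt ht)
      have he : -Real.sin (φ t) * (-ε * g t * Real.sin (φ t))
          = ε * g t * Real.sin (φ t) ^ 2 := by ring
      rw [he]
      positivity
  -- cos (φ 0) > -1
  have habs0 : |φ 0| < π := abs_lt.mpr ⟨h0.1, h0.2⟩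
  have hcos0 : -1 < Real.cos (φ 0) := by
    rw [← Real.cos_pi, ← Real.cos_abs (φ 0)]
    exact Real.cos_lt_cos_of_nonneg_of_le_pi (abs_nonneg _) le_rfl habs0
  -- invariance
  have hinv : ∀ t, 0 ≤ t → |φ t| < π := by
    intro t ht
    by_contra hcon
    push_neg at hcon
    -- IVT: there is s ∈ [0,t] with |φ s| = π
    have hc : ContinuousOn (fun u => |φ u|) (Set.Icc 0 t) :=
      (hφcont.mono (Set.Icc_subset_Ici_self)).abs
    have hmem : π ∈ Set.Icc (|φ 0|) (|φ t|) := ⟨le_of_lt habs0, hcon⟩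
    obtain ⟨s, hs, hseq⟩ := intermediate_value_Icc ht hc hmem
    simp only at hseq
    have hcoss : Real.cos (φ s) = -1 := by
      rw [← Real.cos_abs (φ s), hseq, Real.cos_pi]
    have := hψmono (Set.self_mem_Ici) (Set.mem_Ici.mpr hs.1) hs.1
    simp only [hψdef] at this
    rw [hcoss] at this
    linarith
  constructor
  · exact fun t ht => Set.mem_Ioo.mpr (abs_lt.mp (hinv t ht))
  · intro s hs t ht hst
    have hslt := hinv s hs
    have htlt := hinv t ht
    have h1 : |φ s| = Real.arccos (Real.cos (φ s)) := by
      rw [← Real.cos_abs (φ s), Real.arccos_cos (abs_nonneg _) (le_of_lt hslt)]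
    have h2 : |φ t| = Real.arccos (Real.cos (φ t)) := by
      rw [← Real.cos_abs (φ t), Real.arccos_cos (abs_nonneg _) (le_of_lt htlt)]
    simp only
    rw [h1, h2]
    exact antitone_arccos' (hψmono hs ht hst)
end

section
/- Let ε > 0, c > 0, and let g : [0,∞) → ℝ be continuous with g(t) ≥ c for all t. Suppose φ : [0,∞) → ℝ is differentiable with φ'(t) = −ε·g(t)·sin(φ(t)) and |φ(0)| < π. Then φ(t) → 0 as t → ∞. In particular, the two oscillators achieve in-phase synchronization. -/
open Real

/-- In-phase synchronization: for `φ' = −ε g(t) sin(φ)` with `g(t) ≥ c > 0` and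
`|φ(0)| < π`, the phase difference `φ(t)` converges to `0` as `t → ∞`. -/
theorem phase_difference_convergence
    (ε c : ℝ) (hε : 0 < ε) (hc : 0 < c) (g : ℝ → ℝ)
    (hg_cont : ContinuousOn g (Set.Ici (0 : ℝ)))
    (hg : ∀ t, 0 ≤ t → c ≤ g t)
    (φ : ℝ → ℝ)
    (hφ : ∀ t, 0 ≤ t → HasDerivAt φ (-ε * g t * Real.sin (φ t)) t)
    (h0 : |φ 0| < π) :
    Filter.Tendsto φ Filter.atTop (nhds 0) := by
  set V : ℝ → ℝ := fun t => 1 - Real.cos (φ t) with hVdef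
  -- derivative of V
  have hV : ∀ t, 0 ≤ t →
      HasDerivAt V (-(ε * g t * Real.sin (φ t) ^ 2)) t := by
    intro t ht
    have hcos : HasDerivAt (fun t => Real.cos (φ t))
        (-Real.sin (φ t) * (-ε * g t * Real.sin (φ t))) t :=
      (Real.hasDerivAt_cos (φ t)).comp t (hφ t ht)
    have := (hasDerivAt_const t (1:ℝ)).sub hcos
    exact this.congr_deriv (by ring)
  -- continuity of φ, V on Ici 0
  have hφcont : ContinuousOn φ (Set.Ici (0:ℝ)) :=
    fun t ht => (hφ t ht).continuousAt.continuousWithinAt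
  have hVcont : ContinuousOn V (Set.Ici (0:ℝ)) :=
    fun t ht => (hV t ht).continuousAt.continuousWithinAt
  -- V is antitone on [0, ∞)
  have hVanti : AntitoneOn V (Set.Ici (0:ℝ)) := by
    apply antitoneOn_of_deriv_nonpos (convex_Ici 0) hVcont
    · intro x hx
      rw [interior_Ici] at hx
      exact (hV x (le_of_lt hx)).differentiableAt.differentiableWithinAt
    · intro x hx
      rw [interior_Ici] at hx
      rw [(hV x (le_of_lt hx)).deriv]
      have hgx : 0 < g x := lt_of_lt_of_le hc (hg x (le_of_lt hx))
      have h1 := mul_nonneg (mul_nonneg hε.le hgx.le) (sq_nonneg (Real.sin (φ x)))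
      linarith
  have hVle : ∀ t, 0 ≤ t → V t ≤ V 0 := fun t ht =>
    hVanti (le_refl (0:ℝ)) ht ht
  -- V 0 < 2
  have hV0 : V 0 < 2 := by
    have h1 : Real.cos π < Real.cos |φ 0| :=
      Real.strictAntiOn_cos ⟨abs_nonneg _, h0.le⟩ ⟨Real.pi_pos.le, le_rfl⟩ h0
    rw [Real.cos_pi, Real.cos_abs] at h1
    simp only [hVdef]
    linarith
  have hVnonneg : ∀ t, 0 ≤ V t := fun t => by
    have := Real.cos_le_one (φ t); simp only [hVdef]; linarith
  -- cos (φ t) > -1 for all t ≥ 0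
  have hcosne : ∀ t, 0 ≤ t → -1 < Real.cos (φ t) := by
    intro t ht
    have h1 : 1 - Real.cos (φ t) ≤ 1 - Real.cos (φ 0) := hVle t ht
    have h2 : (1:ℝ) - Real.cos (φ 0) < 2 := hV0
    linarith
  -- |φ t| ≤ π for all t ≥ 0
  have hφbound : ∀ t, 0 ≤ t → |φ t| ≤ π := by
    intro t ht
    by_contra h
    push_neg at h
    have hsub : Set.Icc (0:ℝ) t ⊆ Set.Ici (0:ℝ) := fun s hs => hs.1
    have hcont : ContinuousOn φ (Set.Icc 0 t) := hφcont.mono hsub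
    rcases lt_abs.mp h with h1 | h1
    · -- φ t > π, φ 0 < π : some s with φ s = π
      have hmem : π ∈ Set.Icc (φ 0) (φ t) :=
        ⟨le_of_lt (lt_of_le_of_lt (le_abs_self _) h0), h1.le⟩
      obtain ⟨s, hs, hφs⟩ := intermediate_value_Icc ht hcont hmem
      have := hcosne s hs.1
      rw [hφs, Real.cos_pi] at this
      exact lt_irrefl _ this
    · -- φ t < -π
      have hmem : -π ∈ Set.Icc (φ t) (φ 0) := by
        constructor
        · linarith
        · have := neg_abs_le (φ 0); linarith
      obtain ⟨s, hs, hφs⟩ := intermediate_value_Icc' ht hcont hmem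
      have := hcosne s hs.1
      rw [hφs, Real.cos_neg, Real.cos_pi] at this
      exact lt_irrefl _ this
  -- exponential decay of V
  set k : ℝ := ε * c * (2 - V 0) with hkdef
  have hk : 0 < k := by
    apply mul_pos (mul_pos hε hc); linarith
  set W : ℝ → ℝ := fun t => V t * Real.exp (k * t) with hWdef
  have hWanti : AntitoneOn W (Set.Ici (0:ℝ)) := by
    have hWderiv : ∀ t, 0 ≤ t → HasDerivAt W
        (-(ε * g t * Real.sin (φ t) ^ 2) * Real.exp (k * t)
          + V t * (Real.exp (k * t) * k)) t := by
      intro t ht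
      have hexp : HasDerivAt (fun t => Real.exp (k * t)) (Real.exp (k * t) * k) t := by
        have h1 : HasDerivAt (fun t : ℝ => k * t) k t := by
          simpa using (hasDerivAt_id t).const_mul k
        exact h1.exp
      exact (hV t ht).mul hexp
    apply antitoneOn_of_deriv_nonpos (convex_Ici 0)
    · exact fun t ht => ((hWderiv t ht).continuousAt).continuousWithinAt
    · intro x hx
      rw [interior_Ici] at hx
      exact (hWderiv x (le_of_lt hx)).differentiableAt.differentiableWithinAt
    · intro x hx
      rw [interior_Ici] at hx
      rw [(hWderiv x (le_of_lt hx)).deriv]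
      have hx' : (0:ℝ) ≤ x := le_of_lt hx
      have hgx : c ≤ g x := hg x hx'
      have hVx : V x ≤ V 0 := hVle x hx'
      have hVxn : 0 ≤ V x := hVnonneg x
      have hexp : 0 < Real.exp (k * x) := Real.exp_pos _
      -- sin² φ = 1 - cos² φ = V (2 - V)
      have hsin : Real.sin (φ x) ^ 2 = V x * (2 - V x) := by
        have := Real.sin_sq_add_cos_sq (φ x)
        simp only [hVdef]
        nlinarith
      rw [hsin]
      -- need (-(ε g V(2-V)) + V k) * exp ≤ 0
      have hkey : k * V x ≤ ε * g x * (V x * (2 - V x)) := by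
        have h2 : 2 - V 0 ≤ 2 - V x := by linarith
        have h3 : ε * c * (2 - V 0) ≤ ε * g x * (2 - V x) := by
          apply mul_le_mul _ h2 (by linarith) (mul_nonneg hε.le (hc.le.trans hgx))
          exact mul_le_mul_of_nonneg_left hgx hε.le
        calc k * V x = ε * c * (2 - V 0) * V x := by rw [hkdef]
          _ ≤ ε * g x * (2 - V x) * V x := mul_le_mul_of_nonneg_right h3 hVxn
          _ = ε * g x * (V x * (2 - V x)) := by ring
      nlinarith
  have hWle : ∀ t, 0 ≤ t → W t ≤ V 0 := by
    intro t ht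
    have := hWanti (le_refl (0:ℝ)) ht ht
    simpa [hWdef] using this
  -- quantitative bound on φ²
  have hsq : ∀ t, 0 ≤ t → φ t ^ 2 ≤ (π ^ 2 / 2 * V 0) * Real.exp (-(k * t)) := by
    intro t ht
    have h1 : Real.cos (φ t) ≤ 1 - 2 / π ^ 2 * φ t ^ 2 :=
      Real.cos_le_one_sub_mul_cos_sq (hφbound t ht)
    have h2 : φ t ^ 2 ≤ π ^ 2 / 2 * V t := by
      have hπ2 : (0:ℝ) < π ^ 2 := by positivity
      have h1' : π ^ 2 * Real.cos (φ t) ≤ π ^ 2 * (1 - 2 / π ^ 2 * φ t ^ 2) :=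
        mul_le_mul_of_nonneg_left h1 hπ2.le
      have hcalc : π ^ 2 * (1 - 2 / π ^ 2 * φ t ^ 2) = π ^ 2 - 2 * φ t ^ 2 := by
        field_simp
      rw [hcalc] at h1'
      have hgoal : (π ^ 2 / 2 * V t) = π ^ 2 / 2 * (1 - Real.cos (φ t)) := rfl
      rw [hgoal]
      nlinarith
    have h3 : V t ≤ V 0 * Real.exp (-(k * t)) := by
      have hw := hWle t ht
      have hexp : 0 < Real.exp (k * t) := Real.exp_pos _
      rw [Real.exp_neg]
      rw [hWdef] at hw
      calc V t = V t * Real.exp (k * t) * (Real.exp (k * t))⁻¹ := by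
            field_simp
        _ ≤ V 0 * (Real.exp (k * t))⁻¹ := by
            apply mul_le_mul_of_nonneg_right hw (by positivity)
    calc φ t ^ 2 ≤ π ^ 2 / 2 * V t := h2
      _ ≤ π ^ 2 / 2 * (V 0 * Real.exp (-(k * t))) := by
          apply mul_le_mul_of_nonneg_left h3 (by positivity)
      _ = (π ^ 2 / 2 * V 0) * Real.exp (-(k * t)) := by ring
  -- φ² → 0
  have hexp0 : Filter.Tendsto (fun t => (π ^ 2 / 2 * V 0) * Real.exp (-(k * t)))
      Filter.atTop (nhds 0) := by
    have h1 : Filter.Tendsto (fun t : ℝ => k * t) Filter.atTop Filter.atTop :=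
      Filter.Tendsto.const_mul_atTop hk Filter.tendsto_id
    have h2 : Filter.Tendsto (fun t : ℝ => Real.exp (-(k * t))) Filter.atTop (nhds 0) :=
      Real.tendsto_exp_neg_atTop_nhds_zero.comp h1
    simpa using h2.const_mul (π ^ 2 / 2 * V 0)
  have hsq0 : Filter.Tendsto (fun t => φ t ^ 2) Filter.atTop (nhds 0) := by
    apply squeeze_zero' _ _ hexp0
    · filter_upwards with t using sq_nonneg _
    · filter_upwards [Filter.eventually_ge_atTop (0:ℝ)] with t ht using hsq t ht
  -- |φ| → 0, hence φ → 0
  have habs : Filter.Tendsto (fun t => |φ t|) Filter.atTop (nhds 0) := by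
    have := hsq0.sqrt
    simpa [Real.sqrt_sq_eq_abs] using this
  exact (tendsto_zero_iff_abs_tendsto_zero φ).mpr habs
end

section
/- Let α, β ∈ ℝ and ω = α − β. Let X = (x₁, x₂) : [0,∞) → ℝ² be a solution of the Stuart–Landau system ẋ₁ = x₁ − α x₂ − (x₁ − β x₂)(x₁² + x₂²), ẋ₂ = α x₁ + x₂ − (β x₁ + x₂)(x₁² + x₂²) with X(0) = x₀ ≠ (0,0). Define θ₀ = arg(x₀) − β·log‖x₀‖, where arg denotes the argument of x₀ viewed as a nonzero complex number x₁ + i x₂. Then ‖X(t) − (cos(ωt + θ₀), sin(ωt + θ₀))‖ → 0 as t → ∞. -/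
open Real

/-- The Stuart–Landau vector field (normal form of the supercritical Hopf bifurcation). -/
def slField (α β : ℝ) : ℝ × ℝ → ℝ × ℝ := fun p =>
  (p.1 - α * p.2 - (p.1 - β * p.2) * (p.1 ^ 2 + p.2 ^ 2),
   α * p.1 + p.2 - (β * p.1 + p.2) * (p.1 ^ 2 + p.2 ^ 2))

private lemma sl_fst {X : ℝ → ℝ × ℝ} {v : ℝ × ℝ} {t : ℝ} (h : HasDerivAt X v t) :
    HasDerivAt (fun s => (X s).1) v.1 t :=
  (ContinuousLinearMap.fst ℝ ℝ ℝ).hasFDerivAt.comp_hasDerivAt t h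

private lemma sl_snd {X : ℝ → ℝ × ℝ} {v : ℝ × ℝ} {t : ℝ} (h : HasDerivAt X v t) :
    HasDerivAt (fun s => (X s).2) v.2 t :=
  (ContinuousLinearMap.snd ℝ ℝ ℝ).hasFDerivAt.comp_hasDerivAt t h

private lemma sl_const {f : ℝ → ℂ} (hd : ∀ t, 0 ≤ t → HasDerivAt f 0 t) :
    ∀ t, 0 ≤ t → f t = f 0 := by
  intro t ht
  have hcont : ContinuousOn f (Set.Icc 0 t) := fun s hs =>
    ((hd s hs.1).continuousAt).continuousWithinAt
  exact constant_of_has_deriv_right_zero hcont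
    (fun s hs => ((hd s hs.1).hasDerivWithinAt)) t (Set.mem_Icc.2 ⟨ht, le_refl t⟩)

private lemma sl_u_formula (u : ℝ → ℝ) (hu₀ : 0 < u 0)
    (hd : ∀ t, 0 ≤ t → HasDerivAt u (2 * u t * (1 - u t)) t) :
    ∀ t, 0 ≤ t → u t * (1 - (1 - (u 0)⁻¹) * Real.exp (-2 * t)) = 1 := by
  intro b hb
  set q₀ : ℝ := 1 - (u 0)⁻¹ with hq₀
  set D : ℝ → ℝ := fun t => u t * (1 - q₀ * Real.exp (-2 * t)) - 1 with hD
  have hD0 : D 0 = 0 := by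
    simp only [hD, mul_zero, neg_zero, Real.exp_zero, mul_one, hq₀]
    field_simp
    ring
  have hDd : ∀ t, 0 ≤ t → HasDerivAt D (-(2 * u t) * D t) t := by
    intro t ht
    have h1 : HasDerivAt (fun t => Real.exp (-2 * t)) (Real.exp (-2 * t) * (-2)) t := by
      simpa using HasDerivAt.exp ((hasDerivAt_id t).const_mul (-2))
    have : HasDerivAt D ((2 * u t * (1 - u t)) * (1 - q₀ * Real.exp (-2 * t))
        + u t * (-(q₀ * (Real.exp (-2 * t) * (-2))))) t := by
      have := ((hd t ht).mul (((h1.const_mul q₀).neg.const_add 1))).sub_const 1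
      exact this.congr_deriv (by simp only [Pi.neg_apply]; ring)
    convert this using 1
    simp only [hD]
    ring
  have hDcont : ContinuousOn D (Set.Icc 0 b) := fun s hs =>
    ((hDd s hs.1).continuousAt).continuousWithinAt
  have hucont : ContinuousOn u (Set.Icc 0 b) := fun s hs =>
    ((hd s hs.1).continuousAt).continuousWithinAt
  obtain ⟨K, hK⟩ := (isCompact_Icc).exists_bound_of_continuousOn
    (by exact hucont.const_smul (2:ℝ) : ContinuousOn (fun t => (2:ℝ) • u t) (Set.Icc 0 b))
  have key : ∀ x ∈ Set.Icc 0 b, ‖D x‖ ≤ gronwallBound 0 K 0 (x - 0) := by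
    apply norm_le_gronwallBound_of_norm_deriv_right_le hDcont
      (fun x hx => ((hDd x hx.1).hasDerivWithinAt))
    · simp [hD0]
    · intro x hx
      have hb2 : ‖(2:ℝ) • u x‖ ≤ K := hK x (Set.mem_Icc.2 ⟨hx.1, hx.2.le⟩)
      have : ‖-(2 * u x) * D x‖ = ‖(2:ℝ) • u x‖ * ‖D x‖ := by
        rw [← norm_mul]
        have : -(2 * u x) * D x = -((2:ℝ) • u x * D x) := by simp only [smul_eq_mul]; ring
        rw [this, norm_neg]
      rw [this, add_zero]
      exact mul_le_mul_of_nonneg_right hb2 (norm_nonneg _)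
  have hkb := key b (Set.mem_Icc.2 ⟨hb, le_refl b⟩)
  rw [gronwallBound_ε0_δ0] at hkb
  have : D b = 0 := by simpa [norm_le_zero_iff] using hkb
  simpa [hD, sub_eq_zero] using this

/-- Defining property of the asymptotic phase of the Stuart–Landau oscillator:
any solution starting at a nonzero point `x₀` converges to the limit-cycle trajectory
`(cos(ωt + θ₀), sin(ωt + θ₀))` with `ω = α − β` and asymptotic phase
`θ₀ = arg(x₀) − β log‖x₀‖` (with `x₀` viewed as a nonzero complex number). -/
theorem sl_asymptotic_phase
    (α β ω : ℝ) (hω : ω = α - β)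
    (X : ℝ → ℝ × ℝ) (x₀ : ℝ × ℝ) (hx₀ : x₀ ≠ (0, 0)) (hX0 : X 0 = x₀)
    (hX : ∀ t, 0 ≤ t → HasDerivAt X (slField α β (X t)) t)
    (θ₀ : ℝ)
    (hθ₀ : θ₀ = Complex.arg (x₀.1 + x₀.2 * Complex.I)
              - β * Real.log ‖(x₀.1 + x₀.2 * Complex.I : ℂ)‖) :
    Filter.Tendsto
      (fun t => ‖X t - ((Real.cos (ω * t + θ₀), Real.sin (ω * t + θ₀)) : ℝ × ℝ)‖)
      Filter.atTop (nhds 0) := by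
  set u : ℝ → ℝ := fun s => (X s).1 ^ 2 + (X s).2 ^ 2 with hu
  set z : ℝ → ℂ := fun s => ((X s).1 : ℂ) + ((X s).2 : ℂ) * Complex.I with hzdef
  set c : ℂ := (1 + β * Complex.I) / 2 with hc
  -- initial positivity
  have hx01 : x₀.1 ≠ 0 ∨ x₀.2 ≠ 0 := by
    by_contra h
    push_neg at h
    exact hx₀ (Prod.ext h.1 h.2)
  have hu0 : 0 < u 0 := by
    simp only [hu, hX0]
    rcases hx01 with h | h
    · have : 0 < x₀.1 ^ 2 := by positivity
      nlinarith [sq_nonneg x₀.2]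
    · have : 0 < x₀.2 ^ 2 := by positivity
      nlinarith [sq_nonneg x₀.1]
  -- derivative of u
  have hud : ∀ t, 0 ≤ t → HasDerivAt u (2 * u t * (1 - u t)) t := by
    intro t ht
    have h1 := sl_fst (hX t ht)
    have h2 := sl_snd (hX t ht)
    have := (h1.pow 2).add (h2.pow 2)
    refine this.congr_deriv ?_
    simp only [slField, hu]
    ring
  -- derivative of z
  have hzd : ∀ t, 0 ≤ t → HasDerivAt z
      ((1 + α * Complex.I - (1 + β * Complex.I) * ((u t : ℝ) : ℂ)) * z t) t := by
    intro t ht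
    have h1 := (sl_fst (hX t ht)).ofReal_comp
    have h2 := ((sl_snd (hX t ht)).ofReal_comp).mul_const Complex.I
    have := h1.add h2
    refine this.congr_deriv ?_
    simp only [slField, hu, hzdef]
    push_cast
    ring_nf
    simp only [Complex.I_sq]
    ring
  -- formula for u
  have huf := sl_u_formula u hu0 hud
  set q₀ : ℝ := 1 - (u 0)⁻¹ with hq₀def
  have hq : q₀ < 1 := by
    have : 0 < (u 0)⁻¹ := inv_pos.2 hu0
    rw [hq₀def]; linarith
  have hden : ∀ t, 0 ≤ t → 0 < 1 - q₀ * Real.exp (-2 * t) := by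
    intro t ht
    have he : Real.exp (-2 * t) ≤ 1 := Real.exp_le_one_iff.2 (by linarith)
    have hep : 0 < Real.exp (-2 * t) := Real.exp_pos _
    rcases le_or_gt q₀ 0 with h | h
    · nlinarith
    · nlinarith
  have hueq : ∀ t, 0 ≤ t → u t = (1 - q₀ * Real.exp (-2 * t))⁻¹ := by
    intro t ht
    have h := huf t ht
    exact eq_inv_of_mul_eq_one_left (by linarith [h])
  have hupos : ∀ t, 0 ≤ t → 0 < u t := by
    intro t ht
    rw [hueq t ht]
    exact inv_pos.2 (hden t ht)
  have htendu : Filter.Tendsto u Filter.atTop (nhds 1) := by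
    have hexp : Filter.Tendsto (fun t : ℝ => Real.exp (-2 * t)) Filter.atTop (nhds 0) := by
      apply Real.tendsto_exp_atBot.comp
      exact (Filter.tendsto_const_mul_atBot_of_neg (by norm_num)).2 Filter.tendsto_id
    have h1 : Filter.Tendsto (fun t : ℝ => (1 - q₀ * Real.exp (-2 * t))⁻¹)
        Filter.atTop (nhds 1) := by
      have := ((tendsto_const_nhds (x := (1:ℝ))).sub
        ((tendsto_const_nhds (x := q₀)).mul hexp)).inv₀ (by norm_num)
      simpa using this
    apply h1.congr'
    filter_upwards [Filter.eventually_ge_atTop (0:ℝ)] with t ht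
    exact (hueq t ht).symm
  -- the conserved quantity F
  set E : ℝ → ℂ := fun s => -(Complex.I * ω * (s : ℂ)) - c * (Real.log (u s) : ℂ) with hE
  set F : ℝ → ℂ := fun s => z s * Complex.exp (E s) with hF
  have hFd : ∀ t, 0 ≤ t → HasDerivAt F 0 t := by
    intro t ht
    have hut := hupos t ht
    have hlog : HasDerivAt (fun s => ((Real.log (u s) : ℝ) : ℂ))
        (((2 * u t * (1 - u t)) / u t : ℝ) : ℂ) t := ((hud t ht).log hut.ne').ofReal_comp
    have hlin : HasDerivAt (fun s : ℝ => -(Complex.I * ω * (s : ℂ)))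
        (-(Complex.I * ω)) t := by
      have h0 : HasDerivAt (fun s : ℝ => ((s : ℝ) : ℂ)) 1 t := (hasDerivAt_id t).ofReal_comp
      have h3 := (h0.const_mul (Complex.I * ω)).neg; rw [mul_one] at h3; exact h3
    have hEd : HasDerivAt E
        (-(Complex.I * ω) - c * (((2 * u t * (1 - u t)) / u t : ℝ) : ℂ)) t :=
      hlin.sub (hlog.const_mul c)
    have hFd' := (hzd t ht).mul hEd.cexp
    refine hFd'.congr_deriv ?_
    have hU : ((u t : ℝ) : ℂ) ≠ 0 := by exact_mod_cast hut.ne'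
    subst hω
    push_cast
    field_simp
    ring
  have hFconst := sl_const hFd
  -- F 0 = exp (θ₀ * I)
  have hF0 : F 0 = Complex.exp ((θ₀ : ℂ) * Complex.I) := by
    have hz0 : z 0 = (x₀.1 : ℂ) + x₀.2 * Complex.I := by simp [hzdef, hX0]
    have hu0' : u 0 = x₀.1 ^ 2 + x₀.2 ^ 2 := by simp [hu, hX0]
    have hE0 : E 0 = -(c * (Real.log (x₀.1 ^ 2 + x₀.2 ^ 2) : ℂ)) := by
      simp [hE, hu0']
    have hF0' : F 0 = z 0 * Complex.exp (E 0) := rfl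
    rw [hF0', hz0, hE0]
    set Z : ℂ := (x₀.1 : ℂ) + x₀.2 * Complex.I with hZ
    have hZne : Z ≠ 0 := by
      intro h
      rw [hZ, Complex.ext_iff] at h
      simp only [Complex.add_re, Complex.add_im, Complex.ofReal_re, Complex.ofReal_im,
        Complex.mul_re, Complex.mul_im, Complex.I_re, Complex.I_im, Complex.zero_re,
        Complex.zero_im] at h
      apply hx₀
      have h1 : x₀.1 = 0 := by linarith [h.1]
      have h2 : x₀.2 = 0 := by linarith [h.2]
      exact Prod.ext h1 h2
    have hr : 0 < ‖Z‖ := norm_pos_iff.mpr hZne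
    have habs : (x₀.1 ^ 2 + x₀.2 ^ 2 : ℝ) = ‖Z‖ ^ 2 := by
      rw [Complex.sq_norm]
      simp [hZ, Complex.normSq_apply]
      ring
    set r : ℝ := ‖Z‖ with hrr
    have hlog : Real.log (x₀.1 ^ 2 + x₀.2 ^ 2) = 2 * Real.log r := by
      rw [habs, Real.log_pow]; push_cast; ring
    rw [hlog]
    have hexp : Complex.exp (-(c * ((2 * Real.log r : ℝ) : ℂ)))
        = Complex.exp (-(Real.log r : ℂ)) * Complex.exp (-(β * Real.log r : ℝ) * Complex.I) := by
      rw [← Complex.exp_add, hc]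
      push_cast
      ring_nf
    have hZeq : Z = r * Complex.exp (Complex.arg Z * Complex.I) :=
      (Complex.norm_mul_exp_arg_mul_I Z).symm
    have hexpr : Complex.exp (-(Real.log r : ℂ)) = ((r⁻¹ : ℝ) : ℂ) := by
      rw [← Complex.ofReal_neg, ← Complex.ofReal_exp, Real.exp_neg, Real.exp_log hr]
    rw [hexp]
    calc Z * (Complex.exp (-(Real.log r : ℂ)) * Complex.exp (-(β * Real.log r : ℝ) * Complex.I))
        = (r * Complex.exp (Complex.arg Z * Complex.I)) *
          (((r⁻¹ : ℝ) : ℂ) * Complex.exp (-(β * Real.log r : ℝ) * Complex.I)) := by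
          rw [← hZeq, ← hexpr]
      _ = ((r * r⁻¹ : ℝ) : ℂ) * (Complex.exp (Complex.arg Z * Complex.I) *
          Complex.exp (-(β * Real.log r : ℝ) * Complex.I)) := by push_cast; ring
      _ = Complex.exp ((θ₀ : ℂ) * Complex.I) := by
          rw [mul_inv_cancel₀ hr.ne', ← Complex.exp_add, hθ₀]
          push_cast
          ring_nf
  -- representation of z t
  have hrep : ∀ t, 0 ≤ t →
      z t - Complex.exp (((ω * t + θ₀ : ℝ) : ℂ) * Complex.I)
        = Complex.exp (((ω * t + θ₀ : ℝ) : ℂ) * Complex.I)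
          * (Complex.exp (c * (Real.log (u t) : ℂ)) - 1) := by
    intro t ht
    have h := hFconst t ht
    rw [hF0] at h
    have hne : Complex.exp (E t) ≠ 0 := Complex.exp_ne_zero _
    have hzt : z t = Complex.exp ((θ₀ : ℂ) * Complex.I) * Complex.exp (-(E t)) := by
      rw [Complex.exp_neg, eq_mul_inv_iff_mul_eq₀ hne]
      exact h
    have hsplit : Complex.exp ((θ₀ : ℂ) * Complex.I) * Complex.exp (-(E t))
        = Complex.exp (((ω * t + θ₀ : ℝ) : ℂ) * Complex.I)
          * Complex.exp (c * (Real.log (u t) : ℂ)) := by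
      rw [← Complex.exp_add, ← Complex.exp_add]
      congr 1
      simp only [hE]
      push_cast
      ring
    rw [hzt, hsplit]
    ring
  -- the bounding function tends to 0
  have hg : Filter.Tendsto
      (fun t => ‖Complex.exp (c * (Real.log (u t) : ℂ)) - 1‖)
      Filter.atTop (nhds 0) := by
    have hlogu : Filter.Tendsto (fun t => Real.log (u t)) Filter.atTop (nhds 0) := by
      have := (Real.continuousAt_log (by norm_num : (1:ℝ) ≠ 0)).tendsto.comp htendu
      simpa [Function.comp_def] using this
    have hcont : Continuous (fun x : ℝ => ‖Complex.exp (c * (x : ℂ)) - 1‖) :=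
      continuous_norm.comp (by fun_prop)
    have := (hcont.tendsto 0).comp hlogu
    simpa [Function.comp_def] using this
  -- squeeze
  apply squeeze_zero' (Filter.Eventually.of_forall fun t => norm_nonneg _) _ hg
  filter_upwards [Filter.eventually_ge_atTop (0:ℝ)] with t ht
  set T : ℂ := Complex.exp (((ω * t + θ₀ : ℝ) : ℂ) * Complex.I) with hT
  have hTre : T.re = Real.cos (ω * t + θ₀) := by rw [hT, Complex.exp_ofReal_mul_I_re]
  have hTim : T.im = Real.sin (ω * t + θ₀) := by rw [hT, Complex.exp_ofReal_mul_I_im]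
  have h1 : (z t - T).re = (X t).1 - Real.cos (ω * t + θ₀) := by
    rw [Complex.sub_re, hTre]
    congr 1
    simp [hzdef]
  have h2 : (z t - T).im = (X t).2 - Real.sin (ω * t + θ₀) := by
    rw [Complex.sub_im, hTim]
    congr 1
    simp [hzdef]
  have hle : ‖X t - ((Real.cos (ω * t + θ₀), Real.sin (ω * t + θ₀)) : ℝ × ℝ)‖
      ≤ ‖z t - T‖ := by
    rw [Prod.norm_def]
    apply max_le
    · have := Complex.abs_re_le_norm (z t - T)
      rw [h1] at this
      simpa [Real.norm_eq_abs] using this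
    · have := Complex.abs_im_le_norm (z t - T)
      rw [h2] at this
      simpa [Real.norm_eq_abs] using this
  calc ‖X t - ((Real.cos (ω * t + θ₀), Real.sin (ω * t + θ₀)) : ℝ × ℝ)‖
      ≤ ‖z t - T‖ := hle
    _ = ‖Complex.exp (c * (Real.log (u t) : ℂ)) - 1‖ := by
        rw [hrep t ht, norm_mul, Complex.norm_exp_ofReal_mul_I, one_mul]
end
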